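/- Let F be an r-graph, i ∈ [r−1], and T an i-subset of V(F) such that F(T) is non-empty. Let G be a complex, S an i-set in G, and L ⊆ G(S)^{(r−i)}. Suppose 𝓕' is a κ-well separated F(T)-decomposition of G(S)[L]. Then the extension 𝓕 = S ◁ 𝓕', obtained by replacing each copy F' ∈ 𝓕' of F(T) with a copy of F on vertex set S ∪ V(F') in which S plays the role of T and whose link at S is F', is a κ-well separated F-packing in G, and the set of edges of 𝓕 containing S is exactly S ⊎ L = { S ∪ e : e ∈ L }. -/

import Mathlib

/-- Proposition on link extensions: let `F` be an `r`-graph on vertex type `U`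
(`|U| = f > r`), `T` an `i`-set of `V(F)` with non-empty link `F(T)`, `G` a complex,
`S` an `i`-set in `G`, and `L ⊆ G(S)^{(r-i)}`. A `κ`-well separated
`F(T)`-decomposition `𝓕'` of `G(S)[L]`, together with chosen extensions sending `T`
to `S` (encoded as a family `𝓕` of injective maps `π : U → V` with `π(T) = S` whose
restrictions away from `T` form `𝓕'`), yields `𝓕 = S ◁ 𝓕'`, a `κ`-well separated
`F`-packing in `G` whose edges containing `S` are exactly `S ⊎ L`. -/
theorem link_extension_packing {U V : Type*}
    [Fintype U] [DecidableEq U] [Fintype V] [DecidableEq V]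
    (r i κ : ℕ) (hi1 : 1 ≤ i) (hir : i ≤ r - 1) (hrf : r < Fintype.card U)
    (F : Finset (Finset U)) (hF : ∀ e ∈ F, e.card = r)
    (T : Finset U) (hT : T.card = i) (hFT : ∃ e ∈ F, T ⊆ e)
    (G : Finset (Finset V)) (hG : ∀ e ∈ G, ∀ e' ⊆ e, e' ∈ G)
    (S : Finset V) (hS : S.card = i) (hSG : S ∈ G)
    (L : Finset (Finset V))
    (hL : ∀ e ∈ L, e.card = r - i ∧ Disjoint e S ∧ S ∪ e ∈ G)
    (𝓕 : Finset (U → V))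
    (hinj : ∀ π ∈ 𝓕, Function.Injective π)
    (hrole : ∀ π ∈ 𝓕, T.image π = S)
    -- each link copy has its vertex set in the complex `G(S)[L]`:
    (hin : ∀ π ∈ 𝓕,
      Disjoint ((Finset.univ \ T).image π) S ∧
      S ∪ (Finset.univ \ T).image π ∈ G ∧
      ∀ e ∈ ((Finset.univ \ T).image π).powersetCard (r - i), e ∈ L)
    -- the link copies are pairwise edge-disjoint, have their edges in `L`,
    -- and together cover `L`:
    (hdisj : ∀ π ∈ 𝓕, ∀ π' ∈ 𝓕, π ≠ π' →
      ∀ e, e ∈ (F.filter (fun a => T ⊆ a)).image (fun a => (a \ T).image π) →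
        e ∉ (F.filter (fun a => T ⊆ a)).image (fun a => (a \ T).image π'))
    (hedges : ∀ π ∈ 𝓕, ∀ a ∈ F, T ⊆ a → (a \ T).image π ∈ L)
    (hcover : ∀ e ∈ L, ∃ π ∈ 𝓕,
      e ∈ (F.filter (fun a => T ⊆ a)).image (fun a => (a \ T).image π))
    -- `𝓕'` is `κ`-well separated:
    (hws1 : ∀ π ∈ 𝓕, ∀ π' ∈ 𝓕, π ≠ π' →
      (((Finset.univ \ T).image π) ∩ ((Finset.univ \ T).image π')).card ≤ r - i)
    (hws2 : ∀ e : Finset V, e.card = r - i →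
      (𝓕.filter (fun π => e ⊆ (Finset.univ \ T).image π)).card ≤ κ) :
    -- conclusion: `S ◁ 𝓕'` is a `κ`-well separated `F`-packing in `G`, and
    -- its edges containing `S` are exactly `S ⊎ L`.
    ((∀ π ∈ 𝓕, (Finset.univ : Finset U).image π ∈ G) ∧
      (∀ π ∈ 𝓕, ∀ π' ∈ 𝓕, π ≠ π' →
        ∀ e, e ∈ F.image (fun a => a.image π) → e ∉ F.image (fun a => a.image π')) ∧
      (∀ π ∈ 𝓕, ∀ π' ∈ 𝓕, π ≠ π' →
        (((Finset.univ : Finset U).image π) ∩ ((Finset.univ : Finset U).image π')).card ≤ r) ∧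
      (∀ e : Finset V, e.card = r →
        (𝓕.filter (fun π => e ⊆ (Finset.univ : Finset U).image π)).card ≤ κ)) ∧
    (∀ e : Finset V,
      ((∃ π ∈ 𝓕, e ∈ F.image (fun a => a.image π)) ∧ S ⊆ e) ↔
        ∃ e' ∈ L, e = S ∪ e') := by

  classical
  have hri : i < r := by omega
  have key : ∀ π ∈ 𝓕, (Finset.univ : Finset U).image π = S ∪ (Finset.univ \ T).image π := by
    intro π hπ
    rw [← hrole π hπ, ← Finset.image_union]
    congr 1
    exact (Finset.union_sdiff_of_subset (Finset.subset_univ T)).symm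
  have keyA : ∀ π ∈ 𝓕, ∀ a : Finset U, T ⊆ a → a.image π = S ∪ (a \ T).image π := by
    intro π hπ a ha
    rw [← hrole π hπ, ← Finset.image_union]
    congr 1
    exact (Finset.union_sdiff_of_subset ha).symm
  have hsubA : ∀ (π : U → V) (a : Finset U), (a \ T).image π ⊆ (Finset.univ \ T).image π := by
    intro π a
    exact Finset.image_subset_image (Finset.sdiff_subset_sdiff (Finset.subset_univ a) le_rfl)
  have pullT : ∀ π ∈ 𝓕, ∀ a : Finset U, S ⊆ a.image π → T ⊆ a := by
    intro π hπ a hSa t ht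
    have h1 : π t ∈ S := by
      rw [← hrole π hπ]; exact Finset.mem_image_of_mem π ht
    obtain ⟨u, hu, heq⟩ := Finset.mem_image.mp (hSa h1)
    exact (hinj π hπ heq) ▸ hu
  have sdiffS : ∀ π ∈ 𝓕, ∀ a : Finset U, T ⊆ a → (a.image π) \ S = (a \ T).image π := by
    intro π hπ a ha
    rw [keyA π hπ a ha, Finset.union_sdiff_cancel_left]
    exact ((hin π hπ).1.mono_left (hsubA π a)).symm
  have c3 : ∀ π ∈ 𝓕, ∀ π' ∈ 𝓕, π ≠ π' →
      (((Finset.univ : Finset U).image π) ∩ ((Finset.univ : Finset U).image π')).card ≤ r := by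
    intro π hπ π' hπ' hne
    rw [key π hπ, key π' hπ', ← Finset.union_inter_distrib_left]
    calc (S ∪ ((Finset.univ \ T).image π ∩ (Finset.univ \ T).image π')).card
        ≤ S.card + ((Finset.univ \ T).image π ∩ (Finset.univ \ T).image π').card :=
          Finset.card_union_le _ _
      _ ≤ i + (r - i) := by
          gcongr
          · exact le_of_eq hS
          · exact hws1 π hπ π' hπ' hne
      _ = r := by omega
  refine ⟨⟨?_, ?_, c3, ?_⟩, ?_⟩
  · -- vertex sets in G
    intro π hπ
    rw [key π hπ]
    exact (hin π hπ).2.1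
  · -- edge-disjointness
    intro π hπ π' hπ' hne e he he'
    obtain ⟨a, haF, rfl⟩ := Finset.mem_image.mp he
    obtain ⟨a', ha'F, heq⟩ := Finset.mem_image.mp he'
    have hcard : (a.image π).card = r := by
      rw [Finset.card_image_of_injective a (hinj π hπ)]
      exact hF a haF
    have hsub : a.image π ⊆ (Finset.univ : Finset U).image π ∩ (Finset.univ : Finset U).image π' := by
      apply Finset.subset_inter
      · exact Finset.image_subset_image (Finset.subset_univ a)
      · rw [← heq]; exact Finset.image_subset_image (Finset.subset_univ a')
    have heqI : a.image π = (Finset.univ : Finset U).image π ∩ (Finset.univ : Finset U).image π' :=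
      Finset.eq_of_subset_of_card_le hsub (by rw [hcard]; exact c3 π hπ π' hπ' hne)
    have hSsub : S ⊆ a.image π := by
      rw [heqI]
      exact Finset.subset_inter
        (by rw [key π hπ]; exact Finset.subset_union_left)
        (by rw [key π' hπ']; exact Finset.subset_union_left)
    have hSsub' : S ⊆ a'.image π' := heq ▸ hSsub
    have hTa : T ⊆ a := pullT π hπ a hSsub
    have hTa' : T ⊆ a' := pullT π' hπ' a' hSsub'
    refine hdisj π hπ π' hπ' hne ((a \ T).image π) ?_ ?_
    · exact Finset.mem_image.mpr ⟨a, Finset.mem_filter.mpr ⟨haF, hTa⟩, rfl⟩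
    · refine Finset.mem_image.mpr ⟨a', Finset.mem_filter.mpr ⟨ha'F, hTa'⟩, ?_⟩
      rw [← sdiffS π' hπ' a' hTa', ← sdiffS π hπ a hTa, heq]
  · -- WS2
    intro e he
    by_cases hsize : r - i ≤ (e \ S).card
    · obtain ⟨e', he'sub, he'card⟩ := Finset.exists_subset_card_eq (s := e \ S) (n := r - i) hsize
      calc (𝓕.filter (fun π => e ⊆ (Finset.univ : Finset U).image π)).card
          ≤ (𝓕.filter (fun π => e' ⊆ (Finset.univ \ T).image π)).card := by
            apply Finset.card_le_card
            intro π hπ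
            rw [Finset.mem_filter] at hπ ⊢
            refine ⟨hπ.1, ?_⟩
            have hes : e \ S ⊆ (Finset.univ \ T).image π := by
              rw [key π hπ.1] at hπ
              intro x hx
              rcases Finset.mem_union.mp (hπ.2 (Finset.mem_sdiff.mp hx).1) with h | h
              · exact absurd h (Finset.mem_sdiff.mp hx).2
              · exact h
            exact he'sub.trans hes
        _ ≤ κ := hws2 e' he'card
    · exfalso
      have h1 : (e \ S).card + i ≥ e.card := by
        calc e.card ≤ (e \ S).card + S.card := by
              rw [← Finset.card_sdiff_add_card_inter e S]
              gcongr
              exact Finset.inter_subset_right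
          _ = (e \ S).card + i := by rw [hS]
      omega
  · -- edges containing S = S ⊎ L
    intro e
    constructor
    · rintro ⟨⟨π, hπ, he⟩, hSe⟩
      obtain ⟨a, haF, rfl⟩ := Finset.mem_image.mp he
      have hTa : T ⊆ a := pullT π hπ a hSe
      exact ⟨(a \ T).image π, hedges π hπ a haF hTa, keyA π hπ a hTa⟩
    · rintro ⟨e', he'L, rfl⟩
      obtain ⟨π, hπ, hmem⟩ := hcover e' he'L
      obtain ⟨a, haf, heq⟩ := Finset.mem_image.mp hmem
      rw [Finset.mem_filter] at haf
      refine ⟨⟨π, hπ, Finset.mem_image.mpr ⟨a, haf.1, ?_⟩⟩, Finset.subset_union_left⟩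
      rw [keyA π hπ a haf.2, heq]
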